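/- Let W be a word and X a factor of W of length n. Suppose there is another factor X' of W with |X'| = |X| such that P̂ (the backtrack of P) is a prefix of X' and Ŝ (the backtrack of S) is a suffix of X', where P is a prefix of X, S is a suffix of X, and P ≠ S (as occurrences). Then X has a period of length 2|X| − (|P| + |S|), i.e., X[i] = X[i + 2|X| − (|P|+|S|)] for all valid indices i. -/

import Mathlib

inductive Letter | u | d | l | r
deriving DecidableEq, Repr

def Letter.comp : Letter → Letter
  | .u => .d
  | .d => .u
  | .l => .r
  | .r => .l

/-- The backtrack of a word: the letterwise complement of the reverse. -/
def backtrack (W : List Letter) : List Letter := W.reverse.map Letter.comp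

lemma comp_injective : Function.Injective Letter.comp := by
  intro a b h; cases a <;> cases b <;> simp_all [Letter.comp]

lemma backtrack_length (W : List Letter) : (backtrack W).length = W.length := by
  simp [backtrack]

lemma backtrack_get? (W : List Letter) (j : ℕ) (hj : j < W.length) :
    (backtrack W)[j]? = (W[W.length - 1 - j]?).map Letter.comp := by
  rw [backtrack, List.getElem?_map, List.getElem?_reverse hj]

theorem presuf_period (W X X' P S : List Letter)
    (hX : X <:+: W) (hX' : X' <:+: W) (hlen : X'.length = X.length)
    (hP : P <+: X) (hS : S <:+ X)
    (hPX' : backtrack P <+: X') (hSX' : backtrack S <:+ X')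
    (hPS : ¬ (P = X ∧ S = X)) :
    ∀ i, 1 ≤ i → i + (2 * X.length - (P.length + S.length)) ≤ X.length →
      X[i - 1]? = X[i - 1 + (2 * X.length - (P.length + S.length))]? := by
  intro i hi hle
  by_cases hr0 : 2 * X.length - (P.length + S.length) = 0
  · rw [hr0]; simp
  obtain ⟨t, ht⟩ := hP
  obtain ⟨t', ht'⟩ := hS
  obtain ⟨u, hu⟩ := hPX'
  obtain ⟨v, hv⟩ := hSX'
  have hpn : P.length + t.length = X.length := by rw [← ht]; simp
  have hsn : t'.length + S.length = X.length := by rw [← ht']; simp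
  have hkp : i - 1 < P.length := by omega
  have hjs : i - 1 + X.length - P.length < S.length := by omega
  -- step 1 : X.get? (i-1) = P.get? (i-1)
  have e1 : X[i - 1]? = P[i - 1]? := by
    rw [← ht, List.getElem?_append_left hkp]
  -- step 2&3 : X'.get? (P.length - 1 - (i-1)) = (P.get? (i-1)).map comp
  have e2 : X'[P.length - 1 - (i - 1)]? = (P[i - 1]?).map Letter.comp := by
    rw [← hu, List.getElem?_append_left (by rw [backtrack_length]; omega),
      backtrack_get? P _ (by omega)]
    congr 2
    omega
  -- step 4 : X.get? (i-1+r) = S.get? j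
  have e4 : X[i - 1 + (2 * X.length - (P.length + S.length))]?
      = S[i - 1 + X.length - P.length]? := by
    conv_lhs => rw [← ht']
    rw [List.getElem?_append_right (by simp only [List.length_append]; omega)]
    congr 1
    simp only [List.length_append]
    omega
  have hvlen : v.length = X.length - S.length := by
    have h2 := hv ▸ hlen
    simp only [List.length_append, backtrack_length] at h2
    omega
  -- step 5&6
  have e5 : X'[P.length - 1 - (i - 1)]?
      = (S[i - 1 + X.length - P.length]?).map Letter.comp := by
    rw [← hv, List.getElem?_append_right (by omega),
      backtrack_get? S _ (by omega)]
    congr 2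
    omega
  have e6 : P[i - 1]? = S[i - 1 + X.length - P.length]? :=
    Option.map_injective comp_injective (e2.symm.trans e5)
  rw [e1, e6, e4]
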